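/- The energy function is a Lyapunov function for the OIM dynamics: if θ : ℝ → ℝ^N is differentiable with θ'(t) = f(θ(t)) for all t, then the map t ↦ E(θ(t)) is monotonically nonincreasing on ℝ. -/

import Mathlib

/-- The OIM energy (Lyapunov) function
`E(θ) = -K ∑_{i ≠ j} W i j cos(θ i - θ j) - K_s ∑ i cos(2 θ i)`. -/
noncomputable def oimEnergy (N : ℕ) (W : Fin N → Fin N → ℝ) (K Ks : ℝ)
    (θ : Fin N → ℝ) : ℝ :=
  -K * ∑ i, ∑ j ∈ Finset.univ.filter (fun j => j ≠ i), W i j * Real.cos (θ i - θ j)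
    - Ks * ∑ i, Real.cos (2 * θ i)

/-- The OIM vector field
`f(θ) i = -K ∑_{j ≠ i} W i j sin(θ i - θ j) - K_s sin(2 θ i)`. -/
noncomputable def oimField (N : ℕ) (W : Fin N → Fin N → ℝ) (K Ks : ℝ)
    (θ : Fin N → ℝ) : Fin N → ℝ :=
  fun i => -K * ∑ j ∈ Finset.univ.filter (fun j => j ≠ i), W i j * Real.sin (θ i - θ j)
    - Ks * Real.sin (2 * θ i)

lemma oim_unfilter (N : ℕ) (W : Fin N → Fin N → ℝ) (hdiag : ∀ i, W i i = 0)
    (g : Fin N → Fin N → ℝ) (i : Fin N) :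
    ∑ j ∈ Finset.univ.filter (fun j => j ≠ i), W i j * g i j
      = ∑ j, W i j * g i j := by
  rw [Finset.filter_ne', Finset.sum_erase]
  rw [hdiag]; ring

lemma oim_double_sum (N : ℕ) (W : Fin N → Fin N → ℝ)
    (hsymm : ∀ i j, W i j = W j i) (hdiag : ∀ i, W i i = 0)
    (x v : Fin N → ℝ) :
    ∑ i, ∑ j ∈ Finset.univ.filter (fun j => j ≠ i),
        W i j * (Real.sin (x i - x j) * (v i - v j))
      = 2 * ∑ i, (∑ j ∈ Finset.univ.filter (fun j => j ≠ i),
          W i j * Real.sin (x i - x j)) * v i := by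
  have h1 : ∀ i, (∑ j ∈ Finset.univ.filter (fun j => j ≠ i),
      W i j * Real.sin (x i - x j)) = ∑ j, W i j * Real.sin (x i - x j) :=
    fun i => oim_unfilter N W hdiag (fun i j => Real.sin (x i - x j)) i
  simp only [fun i => oim_unfilter N W hdiag
    (fun i j => Real.sin (x i - x j) * (v i - v j)) i, h1]
  have expand : ∑ i, ∑ j, W i j * (Real.sin (x i - x j) * (v i - v j))
      = (∑ i, ∑ j, W i j * Real.sin (x i - x j) * v i)
        - ∑ i, ∑ j, W i j * Real.sin (x i - x j) * v j := by
    rw [← Finset.sum_sub_distrib]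
    refine Finset.sum_congr rfl fun i _ => ?_
    rw [← Finset.sum_sub_distrib]
    exact Finset.sum_congr rfl fun j _ => by ring
  have swap : ∑ i, ∑ j, W i j * Real.sin (x i - x j) * v j
      = - ∑ i, ∑ j, W i j * Real.sin (x i - x j) * v i := by
    rw [Finset.sum_comm, ← Finset.sum_neg_distrib]
    refine Finset.sum_congr rfl fun j _ => ?_
    rw [← Finset.sum_neg_distrib]
    refine Finset.sum_congr rfl fun i _ => ?_
    rw [hsymm i j]
    have : Real.sin (x i - x j) = - Real.sin (x j - x i) := by
      rw [← Real.sin_neg]; ring_nf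
    rw [this]; ring
  rw [expand, swap, sub_neg_eq_add, ← two_mul]
  congr 1
  exact Finset.sum_congr rfl fun i _ => by rw [Finset.sum_mul]

/-- The energy function is a Lyapunov function for the OIM dynamics: along any
differentiable solution of `θ' = f(θ)`, the energy `t ↦ E(θ(t))` is
monotonically nonincreasing on `ℝ`. -/
theorem oim_energy_is_lyapunov (N : ℕ) (W : Fin N → Fin N → ℝ)
    (hsymm : ∀ i j, W i j = W j i) (hdiag : ∀ i, W i i = 0)
    (K Ks : ℝ) (θ : ℝ → Fin N → ℝ) (hθ : Differentiable ℝ θ)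
    (hode : ∀ t, deriv θ t = oimField N W K Ks (θ t)) :
    Antitone (fun t : ℝ => oimEnergy N W K Ks (θ t)) := by
  have hcomp : ∀ t (i : Fin N),
      HasDerivAt (fun t => θ t i) (oimField N W K Ks (θ t) i) t := by
    intro t i
    have h : HasDerivAt θ (oimField N W K Ks (θ t)) t := by
      have := (hθ t).hasDerivAt
      rwa [hode t] at this
    exact hasDerivAt_pi.mp h i
  have hE : ∀ t, HasDerivAt (fun t : ℝ => oimEnergy N W K Ks (θ t))
      (-2 * ∑ i, (oimField N W K Ks (θ t) i) ^ 2) t := by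
    intro t
    set v : Fin N → ℝ := oimField N W K Ks (θ t) with hv
    have h1 : HasDerivAt (fun t => ∑ i, ∑ j ∈ Finset.univ.filter (fun j => j ≠ i),
        W i j * Real.cos (θ t i - θ t j))
        (∑ i, ∑ j ∈ Finset.univ.filter (fun j => j ≠ i),
          W i j * (-Real.sin (θ t i - θ t j) * (v i - v j))) t := by
      refine HasDerivAt.fun_sum fun i _ => HasDerivAt.fun_sum fun j _ => ?_
      exact (((hcomp t i).sub (hcomp t j)).cos).const_mul (W i j)
    have h2 : HasDerivAt (fun t => ∑ i, Real.cos (2 * θ t i))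
        (∑ i, -Real.sin (2 * θ t i) * (2 * v i)) t := by
      refine HasDerivAt.fun_sum fun i _ => ?_
      exact ((hcomp t i).const_mul 2).cos
    have hD := (h1.const_mul (-K)).sub (h2.const_mul Ks)
    have key : -K * (∑ i, ∑ j ∈ Finset.univ.filter (fun j => j ≠ i),
          W i j * (-Real.sin (θ t i - θ t j) * (v i - v j)))
        - Ks * (∑ i, -Real.sin (2 * θ t i) * (2 * v i))
        = -2 * ∑ i, v i ^ 2 := by
      have hneg : ∑ i, ∑ j ∈ Finset.univ.filter (fun j => j ≠ i),
          W i j * (-Real.sin (θ t i - θ t j) * (v i - v j))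
          = - ∑ i, ∑ j ∈ Finset.univ.filter (fun j => j ≠ i),
            W i j * (Real.sin (θ t i - θ t j) * (v i - v j)) := by
        rw [← Finset.sum_neg_distrib]
        refine Finset.sum_congr rfl fun i _ => ?_
        rw [← Finset.sum_neg_distrib]
        exact Finset.sum_congr rfl fun j _ => by ring
      rw [hneg, oim_double_sum N W hsymm hdiag (θ t) v]
      have hsin2 : ∑ i, -Real.sin (2 * θ t i) * (2 * v i)
          = -2 * ∑ i, Real.sin (2 * θ t i) * v i := by
        rw [Finset.mul_sum]
        exact Finset.sum_congr rfl fun i _ => by ring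
      rw [hsin2]
      have hrw : -K * -(2 * ∑ i, (∑ j ∈ Finset.univ.filter (fun j => j ≠ i),
            W i j * Real.sin (θ t i - θ t j)) * v i)
          - Ks * (-2 * ∑ i, Real.sin (2 * θ t i) * v i)
          = (∑ i, 2 * K * ((∑ j ∈ Finset.univ.filter (fun j => j ≠ i),
              W i j * Real.sin (θ t i - θ t j)) * v i))
            + ∑ i, 2 * Ks * (Real.sin (2 * θ t i) * v i) := by
        have h3 : ∀ a b : ℝ, -K * -(2 * a) - Ks * (-2 * b)
            = 2 * K * a + 2 * Ks * b := fun a b => by ring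
        rw [h3, Finset.mul_sum, Finset.mul_sum]
      rw [hrw, ← Finset.sum_add_distrib, Finset.mul_sum]
      refine Finset.sum_congr rfl fun i _ => ?_
      have hvi : v i = -K * (∑ j ∈ Finset.univ.filter (fun j => j ≠ i),
          W i j * Real.sin (θ t i - θ t j)) - Ks * Real.sin (2 * θ t i) := rfl
      rw [hvi]; ring
    rw [key] at hD
    exact hD
  have hdiff : Differentiable ℝ (fun t : ℝ => oimEnergy N W K Ks (θ t)) :=
    fun t => (hE t).differentiableAt
  refine antitone_of_deriv_nonpos hdiff fun t => ?_
  rw [(hE t).deriv]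
  have : (0:ℝ) ≤ ∑ i, (oimField N W K Ks (θ t) i) ^ 2 :=
    Finset.sum_nonneg fun i _ => sq_nonneg _
  nlinarith
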